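/- If a finite group G is the group of units of some ring of characteristic n > 0, then there exists a finite ring R of characteristic n whose group of units is isomorphic to G. If moreover G is abelian, then R may be taken to be a finite commutative ring of characteristic n. -/

import Mathlib

/-- If a finite group `G` is the group of units of a ring of characteristic `n > 0`, then it
is the group of units of a finite ring of characteristic `n`; if moreover `G` is abelian, the
finite ring may be taken commutative. -/
theorem fuchs_wlog_finite (n : ℕ) (hn : 0 < n) (G : Type) [Group G] [Finite G]
    (h : ∃ (S : Type) (_ : Ring S), CharP S n ∧ Nonempty (Sˣ ≃* G)) :
    (∃ (R : Type) (_ : Ring R) (_ : Fintype R), CharP R n ∧ Nonempty (Rˣ ≃* G)) ∧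
    ((∀ a b : G, a * b = b * a) →
      ∃ (R : Type) (_ : CommRing R) (_ : Fintype R), CharP R n ∧ Nonempty (Rˣ ≃* G)) := by
  obtain ⟨S, _, hS, ⟨e⟩⟩ := h
  haveI : CharP S n := hS
  haveI : NeZero n := ⟨hn.ne'⟩
  haveI : Finite Sˣ := Finite.of_equiv G e.symm.toEquiv
  letI : Algebra (ZMod n) S := ZMod.algebra S n
  -- the ring hom from the group algebra to S
  let φ : MonoidAlgebra (ZMod n) Sˣ →+* S :=
    (MonoidAlgebra.lift (ZMod n) S Sˣ (Units.coeHom S)).toRingHom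
  have hmem : ∀ u : Sˣ, (u : S) ∈ φ.range := fun u =>
    ⟨MonoidAlgebra.of (ZMod n) Sˣ u, MonoidAlgebra.lift_of _ _⟩
  haveI : Finite (MonoidAlgebra (ZMod n) Sˣ) :=
    Finite.of_equiv _ (((Finsupp.equivFunOnFinite : (Sˣ →₀ ZMod n) ≃ (Sˣ → ZMod n))).symm.trans MonoidAlgebra.coeffEquiv.symm)
  haveI hfin : Finite φ.range := by
    have : (φ.range : Set S) = Set.range φ := rfl
    exact Set.Finite.to_subtype (this ▸ Set.finite_range φ)
  -- units of the range are exactly the units of S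
  let ue : (φ.range)ˣ ≃* Sˣ :=
    { toFun := Units.map (φ.range.subtype : φ.range →+* S).toMonoidHom
      invFun := fun u =>
        ⟨⟨(u : S), hmem u⟩, ⟨((u⁻¹ : Sˣ) : S), hmem u⁻¹⟩,
          Subtype.ext (by simp), Subtype.ext (by simp)⟩
      left_inv := fun u => by
        ext
        rfl
      right_inv := fun u => by
        ext
        rfl
      map_mul' := fun u v => by
        ext
        rfl }
  constructor
  · exact ⟨φ.range, inferInstance, Fintype.ofFinite _, inferInstance, ⟨ue.trans e⟩⟩
  · intro hab
    letI : CommGroup Sˣ :=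
      { (inferInstance : Group Sˣ) with
        mul_comm := fun a b => e.injective (by
          have := hab (e a) (e b)
          simpa [map_mul] using this) }
    let R := MonoidAlgebra (ZMod n) Sˣ ⧸ RingHom.ker φ
    let ψ : R ≃+* φ.range := RingHom.quotientKerEquivRange φ
    haveI : Finite R := Finite.of_equiv _ ψ.symm.toEquiv
    haveI : CharP R n := charP_of_injective_ringHom (f := ψ.symm.toRingHom) ψ.symm.injective n
    exact ⟨R, inferInstance, Fintype.ofFinite _,
      inferInstance, ⟨((Units.mapEquiv ψ.toMulEquiv).trans ue).trans e⟩⟩
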